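/- arXiv:2007.03217 — 2 statements merged into one kernel-verified Lean document; each statement's English description precedes it below -/
import Mathlib

section
/- Let G₁ be a finite non-cyclic abelian group with no cyclic Sylow subgroup, and let n ∈ ℕ with gcd(|G₁|, n) = 1. Then the set of dominating vertices of the enhanced power graph of G₁ × ℤ_n is exactly {(e, x) : x ∈ ℤ_n}, where e is the identity of G₁. -/
/-- The enhanced power graph of a group `G`: vertices are elements of `G`,
with distinct `u`, `v` adjacent iff both are powers of a common element. -/
def enhancedPowerGraph (G : Type*) [Group G] : SimpleGraph G where
  Adj u v := u ≠ v ∧ ∃ w : G, u ∈ Subgroup.zpowers w ∧ v ∈ Subgroup.zpowers w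
  symm := by
    constructor
    rintro u v ⟨h, w, hu, hv⟩
    exact ⟨h.symm, w, hv, hu⟩
  loopless := by
    constructor
    rintro u ⟨h, -⟩
    exact h rfl

/-- A dominating vertex: adjacent to every other vertex. -/
def IsDominating {V : Type*} (Γ : SimpleGraph V) (v : V) : Prop :=
  ∀ u, u ≠ v → Γ.Adj v u

/-- The vertex connectivity: the least size of a set of vertices whose removal
leaves a graph that is not connected. -/
noncomputable def vertexConnectivity {V : Type*} (Γ : SimpleGraph V) : ℕ :=
  sInf {n | ∃ s : Set V, s.ncard = n ∧ ¬ (Γ.induce sᶜ).Connected}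


open Finset Subgroup
open scoped Classical

-- zpowers is cyclic
lemma aux_zpowers_isCyclic {G : Type*} [Group G] (w : G) : IsCyclic (Subgroup.zpowers w) := by
  refine ⟨⟨⟨w, Subgroup.mem_zpowers w⟩, fun x => ?_⟩⟩
  obtain ⟨k, hk⟩ := Subgroup.mem_zpowers_iff.mp x.2
  exact ⟨k, Subtype.ext (by simpa using hk)⟩

-- fiber bound: solutions of x^p = a are at most solutions of x^p = 1
lemma aux_fiber {G : Type*} [CommGroup G] [Fintype G] [DecidableEq G] (p : ℕ) (a : G) :
    #{x : G | x ^ p = a} ≤ #{x : G | x ^ p = 1} := by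
  rcases eq_or_ne ({x : G | x ^ p = a} : Finset G) ∅ with h | h
  · simp [h]
  · obtain ⟨x₀, hx₀⟩ := Finset.nonempty_iff_ne_empty.mpr h
    simp only [mem_filter] at hx₀
    apply Finset.card_le_card_of_injOn (fun x => x * x₀⁻¹)
    · intro x hx
      simp only [Finset.mem_coe, mem_filter, mem_univ, true_and] at hx ⊢
      rw [mul_pow, hx, inv_pow, hx₀.2, mul_inv_cancel]
    · intro x _ y _ h
      exact mul_right_cancel h

lemma aux_pow_bound {G : Type*} [CommGroup G] [Fintype G] [DecidableEq G] {p : ℕ}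
    (hsmall : #{x : G | x ^ p = 1} ≤ p) : ∀ k : ℕ, #{x : G | x ^ p ^ k = 1} ≤ p ^ k := by
  intro k
  induction k with
  | zero => simpa using Finset.card_le_one.mpr (by intro a ha b hb; simp at ha hb; rw [ha, hb])
  | succ k ih =>
    calc #{x : G | x ^ p ^ (k+1) = 1}
        ≤ p * #(({x : G | x ^ p ^ (k+1) = 1} : Finset G).image (fun x => x ^ p)) := by
          apply Finset.card_le_mul_card_image
          intro a _
          calc (({x : G | x ^ p ^ (k+1) = 1} : Finset G).filter (fun x => x ^ p = a)).card
              ≤ #{x : G | x ^ p = a} := by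
                apply Finset.card_le_card
                intro x hx
                simp only [mem_filter, mem_univ, true_and] at hx ⊢
                exact hx.2
            _ ≤ p := le_trans (aux_fiber p a) hsmall
      _ ≤ p * p ^ k := by
          apply Nat.mul_le_mul_left
          refine le_trans (Finset.card_le_card ?_) ih
          intro y hy
          simp only [Finset.mem_image, mem_filter, mem_univ, true_and] at hy ⊢
          obtain ⟨x, hx, rfl⟩ := hy
          rw [← pow_mul, ← pow_succ']
          exact hx
      _ = p ^ (k+1) := by ring

lemma aux_cyclic_of_pgroup {H : Type*} [CommGroup H] [Fintype H] [DecidableEq H] {p : ℕ}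
    (hp : p.Prime) (hpg : IsPGroup p H) (hsmall : #{x : H | x ^ p = 1} ≤ p) : IsCyclic H := by
  apply isCyclic_of_card_pow_eq_one_le
  intro n hn
  haveI := Fact.mk hp
  set k := n.factorization p with hk
  have h1 : ({a : H | a ^ n = 1} : Finset H) ⊆ ({a : H | a ^ p ^ k = 1} : Finset H) := by
    intro x hx
    simp only [mem_filter, mem_univ, true_and] at hx ⊢
    obtain ⟨j, hj⟩ := (IsPGroup.iff_orderOf.mp hpg) x
    have hdvd : p ^ j ∣ n := hj ▸ orderOf_dvd_of_pow_eq_one hx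
    have hjk : j ≤ k := (Nat.Prime.pow_dvd_iff_le_factorization hp hn.ne').mp hdvd
    exact orderOf_dvd_iff_pow_eq_one.mp (hj ▸ pow_dvd_pow p hjk)
  calc #{a : H | a ^ n = 1} ≤ #{a : H | a ^ p ^ k = 1} := Finset.card_le_card h1
    _ ≤ p ^ k := aux_pow_bound hsmall k
    _ ≤ n := Nat.le_of_dvd hn (Nat.ordProj_dvd n p)

/-- In a cyclic subgroup, at most `p` elements satisfy `x ^ p = 1`. -/
lemma aux_cyclic_subgroup_bound {G : Type*} [Group G] [Fintype G] [DecidableEq G]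
    (K : Subgroup G) [IsCyclic K] {p : ℕ} (hp : 0 < p) :
    #{x : G | x ∈ K ∧ x ^ p = 1} ≤ p := by
  classical
  calc #{x : G | x ∈ K ∧ x ^ p = 1}
      ≤ #{x : K | x ^ p = 1} := by
        apply Finset.card_le_card_of_surjOn (fun x : K => (x : G))
        intro x hx
        simp only [coe_filter, Set.mem_setOf_eq, mem_univ, true_and] at hx
        refine ⟨⟨x, hx.1⟩, ?_, rfl⟩
        simp only [coe_filter, Set.mem_setOf_eq, mem_univ, true_and]
        ext
        simpa using hx.2
    _ ≤ p := IsCyclic.card_pow_eq_one_le hp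

/-- Key group theory fact: in a finite abelian group with no cyclic Sylow subgroup,
no nonidentity element is "dominating". -/
lemma aux_exists_bad {G : Type*} [CommGroup G] [Fintype G] [DecidableEq G]
    (hsyl : ∀ p : ℕ, p.Prime → p ∣ Nat.card G →
      ∀ P : Sylow p G, ¬ IsCyclic (P : Subgroup G))
    {a : G} (ha : a ≠ 1) :
    ∃ b : G, ∀ w : G, ¬ (a ∈ Subgroup.zpowers w ∧ b ∈ Subgroup.zpowers w) := by
  classical
  set d := orderOf a with hd
  have hd1 : d ≠ 1 := fun h => ha (orderOf_eq_one_iff.mp h)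
  set p := d.minFac with hpdef
  have hp : p.Prime := Nat.minFac_prime hd1
  have hpd : p ∣ d := Nat.minFac_dvd d
  have hpcard : p ∣ Nat.card G := hpd.trans (orderOf_dvd_natCard a)
  obtain ⟨P⟩ : Nonempty (Sylow p G) := inferInstance
  have hPnc := hsyl p hp hpcard P
  -- the p-torsion of G has more than p elements
  have hbig : p < #{x : G | x ^ p = 1} := by
    by_contra hle
    push_neg at hle
    apply hPnc
    have : #{x : (P : Subgroup G) | x ^ p = 1} ≤ #{x : G | x ^ p = 1} := by
      apply Finset.card_le_card_of_injOn (fun x : (P : Subgroup G) => (x : G))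
      · intro x hx
        simp only [Finset.mem_coe, mem_filter, mem_univ, true_and] at hx ⊢
        simpa using congrArg (Subtype.val) hx
      · intro x _ y _ h; exact Subtype.ext h
    exact aux_cyclic_of_pgroup hp P.isPGroup' (this.trans hle)
  -- pick b with b^p = 1 and b ∉ zpowers a
  haveI : IsCyclic (Subgroup.zpowers a) := aux_zpowers_isCyclic a
  have hZa : #{x : G | x ∈ Subgroup.zpowers a ∧ x ^ p = 1} ≤ p :=
    aux_cyclic_subgroup_bound _ hp.pos
  obtain ⟨b, hb⟩ : ∃ b : G, b ^ p = 1 ∧ b ∉ Subgroup.zpowers a := by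
    by_contra hcon
    push_neg at hcon
    have hsub : ({x : G | x ^ p = 1} : Finset G) ⊆ ({x : G | x ∈ Subgroup.zpowers a ∧ x ^ p = 1} : Finset G) := by
      intro x hx
      simp only [mem_filter, mem_univ, true_and] at hx ⊢
      exact ⟨hcon x hx, hx⟩
    exact absurd (le_trans (Finset.card_le_card hsub) hZa) (not_le.mpr hbig)
  -- the element of order p inside zpowers a
  set c := a ^ (d / p) with hc
  have hcord : orderOf c = p := by
    rw [hc, orderOf_pow, ← hd]
    rw [Nat.gcd_eq_right (Nat.div_dvd_of_dvd hpd)]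
    exact Nat.div_div_self hpd (hd ▸ (orderOf_pos a).ne')
  refine ⟨b, fun w ⟨haw, hbw⟩ => ?_⟩
  haveI : IsCyclic (Subgroup.zpowers w) := aux_zpowers_isCyclic w
  have hZw : #{x : G | x ∈ Subgroup.zpowers w ∧ x ^ p = 1} ≤ p :=
    aux_cyclic_subgroup_bound _ hp.pos
  -- but zpowers c ∪ {b} ⊆ that set, and it has p + 1 elements
  have hcw : Subgroup.zpowers c ≤ Subgroup.zpowers w := by
    rw [Subgroup.zpowers_le, hc]
    exact Subgroup.pow_mem _ haw _
  have hsub2 : insert b ((Subgroup.zpowers c : Set G).toFinset)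
      ⊆ ({x : G | x ∈ Subgroup.zpowers w ∧ x ^ p = 1} : Finset G) := by
    intro x hx
    simp only [Finset.mem_insert, Set.mem_toFinset, SetLike.mem_coe] at hx
    simp only [mem_filter, mem_univ, true_and]
    rcases hx with rfl | hx
    · exact ⟨hbw, hb.1⟩
    · refine ⟨hcw hx, ?_⟩
      obtain ⟨i, rfl⟩ := Subgroup.mem_zpowers_iff.mp hx
      have hcp : c ^ p = 1 := hcord ▸ pow_orderOf_eq_one c
      rw [← zpow_natCast, ← zpow_mul, mul_comm, zpow_mul, zpow_natCast, hcp, one_zpow]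
  have hbnotc : b ∉ (Subgroup.zpowers c : Set G) := by
    intro h
    apply hb.2
    have hle : Subgroup.zpowers c ≤ Subgroup.zpowers a :=
      Subgroup.zpowers_le.mpr (Subgroup.pow_mem _ (Subgroup.mem_zpowers a) _)
    exact hle h
  have hcard : (insert b ((Subgroup.zpowers c : Set G).toFinset)).card = p + 1 := by
    rw [Finset.card_insert_of_notMem (by simp only [Set.mem_toFinset]; exact hbnotc)]
    have hpc : Fintype.card (↑(Subgroup.zpowers c) : Set G) = p := by
      rw [← Nat.card_eq_fintype_card, ← hcord]
      exact Nat.card_zpowers c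
    rw [Set.toFinset_card, hpc]
  have := Finset.card_le_card hsub2
  rw [hcard] at this
  omega


lemma aux_dom {G₁ : Type*} [CommGroup G₁] [Finite G₁] {n : ℕ} (hn : 0 < n)
    (hcop : Nat.gcd (Nat.card G₁) n = 1) (x : ZMod n) :
    IsDominating (enhancedPowerGraph (G₁ × Multiplicative (ZMod n)))
      ((1 : G₁), Multiplicative.ofAdd x) := by
  haveI : NeZero n := ⟨hn.ne'⟩
  intro u hu
  refine ⟨hu.symm, (u.1, Multiplicative.ofAdd (1 : ZMod n)), ?_, ?_⟩
  · -- (1, x) is a power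
    have co : Nat.Coprime (orderOf u.1) n :=
      Nat.Coprime.coprime_dvd_left (orderOf_dvd_natCard u.1) hcop
    obtain ⟨k, hk1, hk2⟩ := Nat.chineseRemainder co 0 x.val
    refine ⟨(k : ℤ), ?_⟩
    show (u.1, Multiplicative.ofAdd (1 : ZMod n)) ^ (k : ℤ) = _
    rw [zpow_natCast, Prod.pow_mk, Prod.mk.injEq]
    constructor
    · exact orderOf_dvd_iff_pow_eq_one.mp ((Nat.modEq_zero_iff_dvd).mp hk1)
    · show Multiplicative.ofAdd (1 : ZMod n) ^ k = Multiplicative.ofAdd x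
      rw [← ofAdd_nsmul, nsmul_eq_mul, mul_one]
      congr 1
      rw [(ZMod.natCast_eq_natCast_iff _ _ _).mpr hk2, ZMod.natCast_zmod_val]
  · -- u is a power
    have co : Nat.Coprime (orderOf u.1) n :=
      Nat.Coprime.coprime_dvd_left (orderOf_dvd_natCard u.1) hcop
    obtain ⟨k, hk1, hk2⟩ := Nat.chineseRemainder co 1 (Multiplicative.toAdd u.2).val
    refine ⟨(k : ℤ), ?_⟩
    show (u.1, Multiplicative.ofAdd (1 : ZMod n)) ^ (k : ℤ) = _
    rw [zpow_natCast, Prod.pow_mk]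
    have h1 : u.1 ^ k = u.1 := by
      conv_rhs => rw [← pow_one u.1]
      exact pow_eq_pow_iff_modEq.mpr hk1
    have h2 : Multiplicative.ofAdd (1 : ZMod n) ^ k = u.2 := by
      rw [← ofAdd_nsmul, nsmul_eq_mul, mul_one,
        (ZMod.natCast_eq_natCast_iff _ _ _).mpr hk2, ZMod.natCast_zmod_val]
      exact ofAdd_toAdd u.2
    rw [h1, h2]


theorem stmt_8 {G₁ : Type*} [CommGroup G₁] [Finite G₁] (hnc : ¬ IsCyclic G₁)
    (hsyl : ∀ p : ℕ, p.Prime → p ∣ Nat.card G₁ →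
      ∀ P : Sylow p G₁, ¬ IsCyclic (P : Subgroup G₁))
    (n : ℕ) (hn : 0 < n) (hcop : Nat.gcd (Nat.card G₁) n = 1) :
    {v : G₁ × Multiplicative (ZMod n) |
        IsDominating (enhancedPowerGraph (G₁ × Multiplicative (ZMod n))) v} =
      Set.range (fun x : ZMod n => ((1 : G₁), Multiplicative.ofAdd x)) := by
  haveI : Fintype G₁ := Fintype.ofFinite G₁
  ext v
  simp only [Set.mem_setOf_eq, Set.mem_range]
  constructor
  · intro hdom
    have hv1 : v.1 = 1 := by
      by_contra hne
      obtain ⟨b, hb⟩ := aux_exists_bad hsyl hne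
      have hbne : b ≠ v.1 := by
        intro h
        exact hb v.1 ⟨Subgroup.mem_zpowers _, h ▸ Subgroup.mem_zpowers _⟩
      have hadj := hdom (b, v.2) (by
        intro h
        exact hbne (congrArg Prod.fst h))
      obtain ⟨-, w, hvw, huw⟩ := hadj
      obtain ⟨i, hi⟩ := Subgroup.mem_zpowers_iff.mp hvw
      obtain ⟨j, hj⟩ := Subgroup.mem_zpowers_iff.mp huw
      refine hb w.1 ⟨⟨i, ?_⟩, ⟨j, ?_⟩⟩
      · simpa using congrArg Prod.fst hi
      · simpa using congrArg Prod.fst hj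
    exact ⟨Multiplicative.toAdd v.2, by rw [ofAdd_toAdd, ← hv1]⟩
  · rintro ⟨x, rfl⟩
    exact aux_dom hn hcop x
end

section
/- A finite abelian p-group G with at least 2 distinct subgroups of order p contains exactly p^r − 1 elements of order p, where r is the number of cyclic factors in its decomposition; moreover every component of the identity-deleted enhanced power graph contains exactly p − 1 elements of order p. -/
open Subgroup

open Subgroup

section Aux

variable {p : ℕ}

lemma aux_card_subtype_ne {α : Type*} [Finite α] (a : α) :
    Nat.card {x : α // x ≠ a} = Nat.card α - 1 := by
  have e : {x : α // x ≠ a} ≃ ↥(Set.univ \ {a} : Set α) :=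
    Equiv.subtypeEquivRight (by simp)
  rw [Nat.card_congr e, Nat.card_coe_set_eq,
    Set.ncard_diff_singleton_of_mem (Set.mem_univ a), Set.ncard_univ]

variable {G : Type*} [Group G]

lemma aux_zpowers_eq [Finite G] (hp : p.Prime) {w : G} {m : ℕ} (hw : orderOf w = p ^ m)
    {x : G} (hx : x ∈ zpowers w) (hxp : orderOf x = p) :
    zpowers x = zpowers (w ^ p ^ (m - 1)) := by
  have hm : 1 ≤ m := by
    by_contra h
    have hm0 : m = 0 := by omega
    subst hm0
    rw [pow_zero, orderOf_eq_one_iff] at hw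
    subst hw
    obtain ⟨a, ha⟩ := mem_zpowers_iff.mp hx
    rw [one_zpow] at ha
    exact hp.one_lt.ne' (by rw [← hxp, ← ha, orderOf_one])
  have hpow : p ^ m / p ^ (m - 1) = p := by
    rw [Nat.pow_div (Nat.sub_le m 1) hp.pos, show m - (m - 1) = 1 by omega, pow_one]
  have hzo : orderOf (w ^ p ^ (m - 1)) = p := by
    rw [orderOf_pow, hw, Nat.gcd_eq_right (pow_dvd_pow p (Nat.sub_le m 1)), hpow]
  obtain ⟨a, ha⟩ := mem_zpowers_iff.mp hx
  have hx1 : x ^ (p : ℤ) = 1 := by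
    rw [zpow_natCast, ← hxp, pow_orderOf_eq_one]
  have hdvd : ((p : ℤ) ^ m) ∣ a * p := by
    have : (orderOf w : ℤ) ∣ a * p := by
      rw [orderOf_dvd_iff_zpow_eq_one, zpow_mul, ha, hx1]
    rwa [hw, Nat.cast_pow] at this
  have hdvd' : ((p : ℤ) ^ (m - 1)) ∣ a := by
    have hrw : (p : ℤ) ^ m = (p : ℤ) ^ (m - 1) * p := by
      rw [← pow_succ, show m - 1 + 1 = m by omega]
    rw [hrw] at hdvd
    have hp0 : (p : ℤ) ≠ 0 := by exact_mod_cast hp.pos.ne'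
    exact (mul_dvd_mul_iff_right hp0).mp hdvd
  obtain ⟨c, hc⟩ := hdvd'
  have hxz : x ∈ zpowers (w ^ p ^ (m - 1)) := by
    rw [mem_zpowers_iff]
    refine ⟨c, ?_⟩
    rw [← zpow_natCast w (p ^ (m - 1)), ← zpow_mul, Nat.cast_pow, ← hc, ha]
  refine Subgroup.eq_of_le_of_card_ge (zpowers_le.mpr hxz) ?_
  rw [Nat.card_zpowers, Nat.card_zpowers, hzo, hxp]

lemma aux_socle [Finite G] (hp : p.Prime) (hG : ∀ g : G, ∃ k, orderOf g = p ^ k)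
    {g : G} (hg : g ≠ 1) : orderOf (g ^ (orderOf g / p)) = p := by
  obtain ⟨k, hk⟩ := hG g
  have hk1 : 1 ≤ k := by
    by_contra h
    have : k = 0 := by omega
    subst this
    exact hg (by rw [← orderOf_eq_one_iff, hk, pow_zero])
  have hpow : p ^ k / p ^ (k - 1) = p := by
    rw [Nat.pow_div (Nat.sub_le k 1) hp.pos, show k - (k - 1) = 1 by omega, pow_one]
  have hdiv : orderOf g / p = p ^ (k - 1) := by
    rw [hk, show p ^ k = p ^ (k - 1) * p by rw [← pow_succ, show k - 1 + 1 = k by omega],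
      Nat.mul_div_cancel _ hp.pos]
  rw [hdiv, orderOf_pow, hk, Nat.gcd_eq_right (pow_dvd_pow p (Nat.sub_le k 1)), hpow]

lemma aux_card_ptorsion {C : Type*} [Group C] [Finite C] [IsCyclic C] (hp : p.Prime)
    {n : ℕ} (hn : 1 ≤ n) (hcard : Nat.card C = p ^ n) :
    Nat.card {x : C // x ^ p = 1} = p := by
  haveI := Fact.mk hp
  obtain ⟨g, hg⟩ := IsCyclic.exists_ofOrder_eq_natCard (α := C)
  have hgen : zpowers g = ⊤ :=
    Subgroup.eq_top_of_le_card _ (le_of_eq (by rw [Nat.card_zpowers, hg]))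
  have hgo : orderOf g = p ^ n := by rw [hg, hcard]
  set z := g ^ p ^ (n - 1) with hz
  have hzo : orderOf z = p := by
    have hpow : p ^ n / p ^ (n - 1) = p := by
      rw [Nat.pow_div (Nat.sub_le n 1) hp.pos, show n - (n - 1) = 1 by omega, pow_one]
    rw [hz, orderOf_pow, hgo, Nat.gcd_eq_right (pow_dvd_pow p (Nat.sub_le n 1)), hpow]
  have hset : ∀ x : C, x ^ p = 1 ↔ x ∈ zpowers z := by
    intro x
    constructor
    · intro hx1
      rcases eq_or_ne x 1 with rfl | hx
      · exact one_mem _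
      · have hxo : orderOf x = p := orderOf_eq_prime hx1 hx
        have hxw : x ∈ zpowers g := hgen ▸ Subgroup.mem_top x
        have := aux_zpowers_eq hp hgo hxw hxo
        rw [← this]
        exact mem_zpowers x
    · rintro ⟨a, rfl⟩
      show (z ^ a) ^ (p : ℕ) = 1
      rw [← zpow_natCast, ← zpow_mul, mul_comm, zpow_mul, zpow_natCast, ← hzo,
        pow_orderOf_eq_one, one_zpow]
  rw [Nat.card_congr (Equiv.subtypeEquivRight hset), Nat.card_zpowers, hzo]

end Aux



variable {p : ℕ}

theorem aux_component_count {G : Type*} [Group G] [Finite G] (hp : p.Prime)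
    (hpg : ∀ g : G, ∃ k, orderOf g = p ^ k)
    (c : ((enhancedPowerGraph G).induce {g | g ≠ 1}).ConnectedComponent) :
    Nat.card {v : {g : G // g ≠ 1} |
      ((enhancedPowerGraph G).induce {g | g ≠ 1}).connectedComponentMk v = c ∧
        orderOf (v : G) = p} = p - 1 := by
  refine SimpleGraph.ConnectedComponent.ind (fun v₀ => ?_) c
  set Γ := (enhancedPowerGraph G).induce {g : G | g ≠ 1} with hΓ
  set φ : ↥{g : G | g ≠ 1} → Subgroup G :=
    fun v => zpowers ((v : G) ^ (orderOf (v : G) / p)) with hφ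
  have hφord : ∀ v : ↥{g : G | g ≠ 1}, orderOf ((v : G) ^ (orderOf (v : G) / p)) = p :=
    fun v => aux_socle hp hpg v.2
  have hφmem : ∀ v : ↥{g : G | g ≠ 1}, (v : G) ^ (orderOf (v : G) / p) ∈ zpowers (v : G) :=
    fun v => npow_mem_zpowers _ _
  have hφp : ∀ v : ↥{g : G | g ≠ 1}, orderOf (v : G) = p → φ v = zpowers (v : G) := by
    intro v hv
    rw [hφ]
    simp only [hv, Nat.div_self hp.pos, pow_one]
  have hadj : ∀ u v, Γ.Adj u v → φ u = φ v := by
    intro u v h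
    obtain ⟨hne, w, hu, hv⟩ := h
    obtain ⟨m, hm⟩ := hpg w
    have h1 : (u : G) ^ (orderOf (u : G) / p) ∈ zpowers w :=
      zpowers_le.mpr hu (hφmem u)
    have h2 : (v : G) ^ (orderOf (v : G) / p) ∈ zpowers w :=
      zpowers_le.mpr hv (hφmem v)
    rw [hφ]
    simp only
    rw [aux_zpowers_eq hp hm h1 (hφord u), aux_zpowers_eq hp hm h2 (hφord v)]
  have hconst : ∀ (a b : ↥{g : G | g ≠ 1}) (w : Γ.Walk a b), φ a = φ b := by
    intro a b w
    induction w with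
    | nil => rfl
    | cons h _ ih => exact (hadj _ _ h).trans ih
  have hmkeq : ∀ u v, Γ.connectedComponentMk u = Γ.connectedComponentMk v → φ u = φ v := by
    intro u v h
    exact congrArg (SimpleGraph.ConnectedComponent.lift φ (fun a b w _ => hconst a b w)) h
  have hsne : ∀ v : ↥{g : G | g ≠ 1}, ((v : G) ^ (orderOf (v : G) / p)) ≠ 1 := by
    intro v h1
    have := hφord v
    rw [h1, orderOf_one] at this
    exact hp.one_lt.ne' this.symm
  have hstep : ∀ v : ↥{g : G | g ≠ 1},
      Γ.connectedComponentMk v =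
        Γ.connectedComponentMk ⟨(v : G) ^ (orderOf (v : G) / p), hsne v⟩ := by
    intro v
    rcases eq_or_ne (v : G) ((v : G) ^ (orderOf (v : G) / p)) with he | hne
    · congr 1
      exact Subtype.ext he
    · refine SimpleGraph.ConnectedComponent.connectedComponentMk_eq_of_adj ?_
      show (enhancedPowerGraph G).Adj (v : G) ((v : G) ^ (orderOf (v : G) / p))
      exact ⟨hne, (v : G), mem_zpowers _, hφmem v⟩
  have hreach : ∀ u v : ↥{g : G | g ≠ 1},
      φ u = φ v → Γ.connectedComponentMk u = Γ.connectedComponentMk v := by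
    intro u v h
    refine (hstep u).trans (Eq.trans ?_ (hstep v).symm)
    rcases eq_or_ne ((u : G) ^ (orderOf (u : G) / p)) ((v : G) ^ (orderOf (v : G) / p)) with
      he | hne
    · congr 1
      exact Subtype.ext he
    · refine SimpleGraph.ConnectedComponent.connectedComponentMk_eq_of_adj ?_
      show (enhancedPowerGraph G).Adj ((u : G) ^ (orderOf (u : G) / p))
        ((v : G) ^ (orderOf (v : G) / p))
      refine ⟨hne, (u : G) ^ (orderOf (u : G) / p), mem_zpowers _, ?_⟩
      have : φ v = φ u := (h).symm
      rw [hφ] at this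
      simp only at this
      rw [← this]
      exact mem_zpowers _
  have hPcard : Nat.card ↥(φ v₀) = p := by
    rw [hφ]
    simp only
    rw [Nat.card_zpowers]
    exact hφord v₀
  have horder : orderOf ((v₀ : G) ^ (orderOf (v₀ : G) / p)) = p ^ 1 := by
    rw [pow_one]; exact hφord v₀
  have hφv₀ : φ v₀ = zpowers ((v₀ : G) ^ (orderOf (v₀ : G) / p)) := rfl
  have hfwd : ∀ v : ↥{g : G | g ≠ 1},
      Γ.connectedComponentMk v = Γ.connectedComponentMk v₀ → orderOf (v : G) = p →
        (v : G) ∈ φ v₀ := by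
    intro v hc ho
    have := hmkeq _ _ hc
    rw [hφp v ho] at this
    rw [← this]
    exact mem_zpowers _
  have hordx : ∀ x : G, x ∈ φ v₀ → x ≠ 1 → orderOf x = p := by
    intro x hx hx1
    have h1 : orderOf x ∣ Nat.card ↥(φ v₀) := by
      rw [← Subgroup.orderOf_mk x hx]
      exact orderOf_dvd_natCard _
    rw [hPcard] at h1
    rcases (Nat.dvd_prime hp).mp h1 with h | h
    · exact absurd (orderOf_eq_one_iff.mp h) hx1
    · exact h
  have hzpx : ∀ x : G, x ∈ φ v₀ → x ≠ 1 → zpowers x = φ v₀ := by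
    intro x hx hx1
    rw [hφv₀] at hx ⊢
    have := aux_zpowers_eq hp horder hx (hordx x hx hx1)
    simpa using this
  have hinv : ∀ x : {y : ↥(φ v₀) // y ≠ 1},
      Γ.connectedComponentMk ⟨((x.1 : G)), fun h => x.2 (Subtype.ext h)⟩ =
          Γ.connectedComponentMk v₀ ∧
        orderOf ((x.1 : G)) = p := by
    intro x
    have hne : (x.1 : G) ≠ 1 := fun h => x.2 (Subtype.ext h)
    have ho := hordx _ x.1.2 hne
    refine ⟨?_, ho⟩
    apply hreach
    rw [hφp _ ho]
    exact (hzpx _ x.1.2 hne).trans rfl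
  have e : ↥{v : ↥{g : G | g ≠ 1} | Γ.connectedComponentMk v = Γ.connectedComponentMk v₀ ∧
      orderOf (v : G) = p} ≃ {x : ↥(φ v₀) // x ≠ 1} :=
    { toFun := fun v => ⟨⟨(v.1 : G), hfwd v.1 v.2.1 v.2.2⟩,
        fun h => v.1.2 (congrArg Subtype.val h)⟩
      invFun := fun x => ⟨⟨(x.1 : G), fun h => x.2 (Subtype.ext h)⟩, hinv x⟩
      left_inv := fun v => Subtype.ext (Subtype.ext rfl)
      right_inv := fun x => Subtype.ext (Subtype.ext rfl) }
  exact (Nat.card_congr e).trans (by rw [aux_card_subtype_ne, hPcard])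


theorem stmt_14 {p : ℕ} (hp : p.Prime) (r : ℕ) (hr : 2 ≤ r)
    (t : Fin r → ℕ) (ht : ∀ i, 1 ≤ t i) :
    Nat.card {g : (i : Fin r) → Multiplicative (ZMod (p ^ t i)) | orderOf g = p} =
        p ^ r - 1 ∧
      ∀ c : ((enhancedPowerGraph
          ((i : Fin r) → Multiplicative (ZMod (p ^ t i)))).induce
            {g | g ≠ 1}).ConnectedComponent,
        Nat.card {v : {g : (i : Fin r) → Multiplicative (ZMod (p ^ t i)) // g ≠ 1} |
          ((enhancedPowerGraph
            ((i : Fin r) → Multiplicative (ZMod (p ^ t i)))).induce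
              {g | g ≠ 1}).connectedComponentMk v = c ∧ orderOf (v : (i : Fin r) → Multiplicative (ZMod (p ^ t i))) = p} = p - 1 := by
  haveI := Fact.mk hp
  haveI : ∀ i, NeZero (p ^ t i) := fun i => ⟨pow_ne_zero _ hp.pos.ne'⟩
  have hcard : ∀ i : Fin r, Nat.card (Multiplicative (ZMod (p ^ t i))) = p ^ t i := by
    intro i
    rw [Nat.card_congr Multiplicative.toAdd, Nat.card_zmod]
  have hcardG : Nat.card ((i : Fin r) → Multiplicative (ZMod (p ^ t i))) = p ^ (∑ i, t i) := by
    rw [Nat.card_pi]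
    simp only [hcard]
    rw [Finset.prod_pow_eq_pow_sum]
  have hpg : ∀ g : ((i : Fin r) → Multiplicative (ZMod (p ^ t i))), ∃ k, orderOf g = p ^ k := by
    intro g
    have hdvd := orderOf_dvd_natCard g
    rw [hcardG] at hdvd
    obtain ⟨k, -, hk⟩ := (Nat.dvd_prime_pow hp).mp hdvd
    exact ⟨k, hk⟩
  constructor
  · have hT : Nat.card {g : (i : Fin r) → Multiplicative (ZMod (p ^ t i)) // g ^ p = 1} =
        p ^ r := by
      have e1 : {g : (i : Fin r) → Multiplicative (ZMod (p ^ t i)) // g ^ p = 1} ≃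
          {g : (i : Fin r) → Multiplicative (ZMod (p ^ t i)) // ∀ i, (g i) ^ p = 1} :=
        Equiv.subtypeEquivRight (fun g => by simp [funext_iff])
      rw [Nat.card_congr (e1.trans (@Equiv.subtypePiEquivPi (Fin r)
        (fun i => Multiplicative (ZMod (p ^ t i))) (fun _ x => x ^ p = 1))), Nat.card_pi]
      have hfac : ∀ i : Fin r, Nat.card {x : Multiplicative (ZMod (p ^ t i)) // x ^ p = 1} = p :=
        fun i => aux_card_ptorsion hp (ht i) (hcard i)
      simp only [hfac]
      rw [Finset.prod_const, Finset.card_univ, Fintype.card_fin]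
    have hsetEq : {g : (i : Fin r) → Multiplicative (ZMod (p ^ t i)) | orderOf g = p} =
        {g : (i : Fin r) → Multiplicative (ZMod (p ^ t i)) | g ^ p = 1} \ {1} := by
      ext g
      simp only [Set.mem_setOf_eq, Set.mem_diff, Set.mem_singleton_iff]
      constructor
      · intro h
        refine ⟨by have hh := pow_orderOf_eq_one g; rwa [h] at hh, fun h1 => ?_⟩
        rw [h1, orderOf_one] at h
        exact hp.one_lt.ne' h.symm
      · intro ⟨h1, h2⟩
        exact orderOf_eq_prime h1 h2
    rw [hsetEq, Nat.card_coe_set_eq,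
      Set.ncard_diff_singleton_of_mem (by simp : (1 : (i : Fin r) →
        Multiplicative (ZMod (p ^ t i))) ∈ {g | g ^ p = 1}),
      ← Nat.card_coe_set_eq]
    have hcoe : Nat.card
        ↥{g : (i : Fin r) → Multiplicative (ZMod (p ^ t i)) | g ^ p = 1} = p ^ r := hT
    rw [hcoe]
  · intro c
    exact aux_component_count hp hpg c
end
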